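/- Under the top trading cycles mechanism, the majority quota and its corresponding minority reserve can produce different matchings: in the market with two schools c₁ (capacity 2), c₂ (capacity 1), majority students s₁, s₂ and minority student s₃, priorities ≻_{c₁}: s₂, s₃, s₁ and ≻_{c₂}: s₁, s₂, s₃, preferences P_{s₁}: c₁ only, P_{s₂}: c₂ only, P_{s₃}: c₂ only, with majority quotas (q^M_{c₁}, q^M_{c₂}) = (1,1): TTCM-Q assigns s₁→c₁, s₂→c₂, s₃ unmatched, while TTCM-R (with reserves (r^m_{c₁}, r^m_{c₂}) = (1,0)) assigns s₁→c₁, s₃→c₂, s₂ unmatched. -/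

import Mathlib

open Finset

/-- A school choice market with affirmative actions: students `α`, schools `β`.
`minority s` says whether student `s` is a minority student; `prio c` is the ranking
of students by school `c` (lower number = higher priority); `cap c` is the capacity
`q_c`; `quota c` is the majority quota `q^M_c` (the corresponding minority reserve is
`r^m_c = q_c - q^M_c`). -/
structure Market (α β : Type*) where
  minority : α → Bool
  prio : β → α → ℕ
  cap : β → ℕ
  quota : β → ℕ

namespace Market

noncomputable section
open scoped Classical

variable {α β : Type*} [Fintype α] [DecidableEq α] [Fintype β] [DecidableEq β]

/-- The minority reserve corresponding to the majority quota: `r^m_c = q_c - q^M_c`. -/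
def reserve (M : Market α β) (c : β) : ℕ := M.cap c - M.quota c

/-- Number of students assigned to school `c` under assignment `μ`. -/
def assignedCard (μ : α → Option β) (c : β) : ℕ :=
  (univ.filter fun s => μ s = some c).card

/-- Number of majority students assigned to school `c`. -/
def majCard (M : Market α β) (μ : α → Option β) (c : β) : ℕ :=
  (univ.filter fun s => μ s = some c ∧ M.minority s = false).card

/-- Number of minority students assigned to school `c`. -/
def minCard (M : Market α β) (μ : α → Option β) (c : β) : ℕ :=
  (univ.filter fun s => μ s = some c ∧ M.minority s = true).card

/-- One applicant is considered: accepted if capacity remains and (for a majority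
student) the majority quota is not yet exhausted. -/
def acceptFold (isMin : α → Bool) (st : List α × ℕ × ℕ) (a : α) : List α × ℕ × ℕ :=
  match st with
  | (acc, cLeft, qLeft) =>
    if cLeft = 0 then (acc, cLeft, qLeft)
    else if isMin a then (a :: acc, cLeft - 1, qLeft)
    else if 0 < qLeft then (a :: acc, cLeft - 1, qLeft - 1)
    else (acc, cLeft, qLeft)

/-- The set of applicants a school permanently accepts in one round of the immediate
acceptance algorithm: first minority applicants up to the remaining minority reserve in
priority order, then remaining applicants in priority order up to remaining capacity,
never exceeding the remaining majority quota for majority students. -/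
def acceptList (prio : α → ℕ) (isMin : α → Bool) (apps : List α)
    (capLeft quotaLeft resLeft : ℕ) : List α :=
  let sorted := apps.mergeSort (fun a b => prio a ≤ prio b)
  let resAcc := (sorted.filter fun a => isMin a).take resLeft
  let rest := sorted.filter fun a => ¬ a ∈ resAcc
  resAcc ++ (rest.foldl (acceptFold isMin) ([], capLeft - resAcc.length, quotaLeft)).1

/-- State of the immediate acceptance algorithm: current (permanent) assignment and the
position of each student in her reported preference list. -/
structure IAMState (α β : Type*) where
  assign : α → Option β
  pos : α → ℕ

/-- One round of the immediate acceptance mechanism with affirmative actions.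
If `useReserve = false` this is the majority-quota version (IAM-Q, `r^m = 0`);
if `useReserve = true` this is the minority-reserve version (IAM-R, `q^M = q`). -/
def iamRound (M : Market α β) (rep : α → List β) (useReserve : Bool)
    (st : IAMState α β) : IAMState α β :=
  let capLeft : β → ℕ := fun c => M.cap c - assignedCard st.assign c
  let quotaLeft : β → ℕ := fun c =>
    if useReserve then capLeft c else M.quota c - majCard M st.assign c
  let resLeft : β → ℕ := fun c =>
    if useReserve then M.reserve c - minCard M st.assign c else 0
  let applies : α → Option β := fun s =>
    if st.assign s = none then (rep s)[st.pos s]? else none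
  let accepted : β → List α := fun c =>
    acceptList (M.prio c) M.minority
      ((univ.filter fun s => applies s = some c).toList) (capLeft c) (quotaLeft c)
      (resLeft c)
  { assign := fun s =>
      match st.assign s with
      | some c => some c
      | none =>
        match applies s with
        | some c => if s ∈ accepted c then some c else none
        | none => none
    pos := fun s => if (applies s).isSome then st.pos s + 1 else st.pos s }

/-- The immediate acceptance mechanism with affirmative actions (outcome). -/
def iam (M : Market α β) (rep : α → List β) (useReserve : Bool) : α → Option β :=
  ((iamRound M rep useReserve)^[(univ.sup fun s => (rep s).length) + 1]
    ⟨fun _ => none, fun _ => 0⟩).assign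

/-- State of the top trading cycles algorithm. -/
structure TTCState (α β : Type*) where
  remaining : Finset α
  assign : α → Option β

/-- The student a school points to: if the reserve counter is positive and a minority
student remains, its highest-priority remaining minority student; otherwise its
highest-priority remaining student. -/
def schoolPoint (M : Market α β) (useReserve : Bool) (st : TTCState α β) (c : β) :
    Option α :=
  let resLeft := if useReserve then M.reserve c - minCard M st.assign c else 0
  let mins := st.remaining.filter fun s => M.minority s = true
  if 0 < resLeft ∧ mins.Nonempty then mins.toList.argmin (M.prio c)
  else st.remaining.toList.argmin (M.prio c)

/-- The school a student points to: her most preferred acceptable school with a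
remaining seat for her (positive capacity counter and, for a majority student in the
quota version, positive quota counter); `none` means she points to herself. -/
def studentPoint (M : Market α β) (rep : α → List β) (useReserve : Bool)
    (st : TTCState α β) (s : α) : Option β :=
  (rep s).find? fun c =>
    decide (0 < M.cap c - assignedCard st.assign c ∧
      (M.minority s = true ∨ useReserve = true ∨ 0 < M.quota c - majCard M st.assign c))

/-- The successor map: a student points to a school which points back to a student. -/
def nextMap (M : Market α β) (rep : α → List β) (useReserve : Bool)
    (st : TTCState α β) (s : α) : α :=
  match studentPoint M rep useReserve st s with
  | none => s
  | some c =>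
    match schoolPoint M useReserve st c with
    | none => s
    | some t => t

/-- A student lies on a (trading) cycle of the pointing maps. -/
def inCycle (M : Market α β) (rep : α → List β) (useReserve : Bool)
    (st : TTCState α β) (s : α) : Prop :=
  ∃ k ∈ Finset.Icc 1 (Fintype.card α), (nextMap M rep useReserve st)^[k] s = s

/-- One step of the top trading cycles mechanism with affirmative actions: all students
in cycles are assigned to the school they point to (or to themselves) and removed. -/
def ttcStep (M : Market α β) (rep : α → List β) (useReserve : Bool)
    (st : TTCState α β) : TTCState α β :=
  let cyc := st.remaining.filter fun s => inCycle M rep useReserve st s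
  { remaining := st.remaining \ cyc
    assign := fun s =>
      if s ∈ cyc then studentPoint M rep useReserve st s else st.assign s }

/-- The top trading cycles mechanism with affirmative actions: `useReserve = false`
gives the TTCM with majority quotas (TTCM-Q), `useReserve = true` gives the TTCM with
minority reserves (TTCM-R). -/
def ttcm (M : Market α β) (rep : α → List β) (useReserve : Bool) : α → Option β :=
  ((ttcStep M rep useReserve)^[Fintype.card α] ⟨univ, fun _ => none⟩).assign

/-- Rank of an outcome in a preference list: smaller is better; being unmatched (or
matched to an unlisted school) has rank equal to the length of the list. -/
def rankOf (pref : List β) : Option β → ℕ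
  | none => pref.length
  | some c => pref.idxOf c

/-- Student `s` strictly prefers outcome `x` to outcome `y`. -/
def prefStrict (pref : α → List β) (s : α) (x y : Option β) : Prop :=
  rankOf (pref s) x < rankOf (pref s) y

end

end Market

section Aux
open Market Finset
open scoped Classical

lemma argmin_toList {α : Type*} [DecidableEq α] (s : Finset α) (f : α → ℕ) (m : α)
    (hm : m ∈ s) (h : ∀ a ∈ s, a ≠ m → f m < f a) : s.toList.argmin f = some m := by
  rw [List.argmin_eq_some_iff]
  refine ⟨Finset.mem_toList.2 hm, ?_, ?_⟩
  · intro a ha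
    rcases eq_or_ne a m with rfl | hne
    · exact le_refl _
    · exact (h a (Finset.mem_toList.1 ha) hne).le
  · intro a ha hle
    rcases eq_or_ne a m with rfl | hne
    · exact le_refl _
    · exact absurd hle (not_le.2 (h a (Finset.mem_toList.1 ha) hne))

def Mex : Market (Fin 3) (Fin 2) :=
  { minority := ![false, false, true]
    prio := ![![2, 0, 1], ![0, 1, 2]]
    cap := ![2, 1]
    quota := ![1, 1] }

def repEx : Fin 3 → List (Fin 2) := ![[0], [1], [1]]

def st0 : TTCState (Fin 3) (Fin 2) := ⟨univ, fun _ => none⟩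
def aQ : Fin 3 → Option (Fin 2) := ![some 0, some 1, none]
def aR : Fin 3 → Option (Fin 2) := ![some 0, none, some 1]
def stQ1 : TTCState (Fin 3) (Fin 2) := ⟨{2}, aQ⟩
def stQ2 : TTCState (Fin 3) (Fin 2) := ⟨∅, aQ⟩
def stR1 : TTCState (Fin 3) (Fin 2) := ⟨{1}, aR⟩
def stR2 : TTCState (Fin 3) (Fin 2) := ⟨∅, aR⟩

lemma hschQ0 : schoolPoint Mex false st0 0 = some 1 := by
  simp only [schoolPoint]
  rw [if_neg (by simp)]
  exact argmin_toList _ _ _ (by decide) (by decide)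

lemma hschQ1 : schoolPoint Mex false st0 1 = some 0 := by
  simp only [schoolPoint]
  rw [if_neg (by simp)]
  exact argmin_toList _ _ _ (by decide) (by decide)

lemma hsptQ : ∀ s, studentPoint Mex repEx false st0 s = ![some 0, some 1, some 1] s := by
  decide

lemma hsptQ0 : studentPoint Mex repEx false st0 0 = some 0 := by decide
lemma hsptQ1 : studentPoint Mex repEx false st0 1 = some 1 := by decide
lemma hsptQ2 : studentPoint Mex repEx false st0 2 = some 1 := by decide

lemma hnextQ : nextMap Mex repEx false st0 = ![1, 0, 0] := by
  funext s
  fin_cases s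
  · show nextMap Mex repEx false st0 0 = 1
    simp only [nextMap, hsptQ0, hschQ0]
  · show nextMap Mex repEx false st0 1 = 0
    simp only [nextMap, hsptQ1, hschQ1]
  · show nextMap Mex repEx false st0 2 = 0
    simp only [nextMap, hsptQ2, hschQ1]

lemma fin3cases : ∀ x : Fin 3, x = 0 ∨ x = 1 ∨ x = 2 := by decide

lemma hicQ0 : inCycle Mex repEx false st0 0 := by
  simp only [inCycle, hnextQ]; decide

lemma hicQ1 : inCycle Mex repEx false st0 1 := by
  simp only [inCycle, hnextQ]; decide

lemma hicQ2 : ¬ inCycle Mex repEx false st0 2 := by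
  simp only [inCycle, hnextQ]; decide

lemma hcycQ0 : Finset.filter (fun s => inCycle Mex repEx false st0 s) st0.remaining
    = ({0, 1} : Finset (Fin 3)) := by
  ext a
  rcases fin3cases a with rfl | rfl | rfl <;>
    simp [Finset.mem_filter, hicQ0, hicQ1, hicQ2, show st0.remaining = univ from rfl]

lemma hstepQ0 : ttcStep Mex repEx false st0 = stQ1 := by
  simp only [ttcStep, hcycQ0, stQ1, TTCState.mk.injEq]
  refine ⟨by decide, ?_⟩
  funext s
  rcases fin3cases s with rfl | rfl | rfl
  · rw [if_pos (by decide), hsptQ0]; rfl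
  · rw [if_pos (by decide), hsptQ1]; rfl
  · rw [if_neg (by decide)]; rfl

lemma hsptQ1' : studentPoint Mex repEx false stQ1 2 = none := by decide

lemma hicQ1'2 : inCycle Mex repEx false stQ1 2 := by
  refine ⟨1, by decide, ?_⟩
  show nextMap Mex repEx false stQ1 2 = 2
  simp only [nextMap, hsptQ1']

lemma hcycQ1 : Finset.filter (fun s => inCycle Mex repEx false stQ1 s) stQ1.remaining
    = ({2} : Finset (Fin 3)) := by
  ext a
  rcases fin3cases a with rfl | rfl | rfl <;>
    simp [Finset.mem_filter, hicQ1'2, show stQ1.remaining = ({2} : Finset (Fin 3)) from rfl]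

lemma hstepQ1 : ttcStep Mex repEx false stQ1 = stQ2 := by
  simp only [ttcStep, hcycQ1, stQ2, TTCState.mk.injEq]
  refine ⟨by decide, ?_⟩
  funext s
  rcases fin3cases s with rfl | rfl | rfl
  · rw [if_neg (by decide)]; rfl
  · rw [if_neg (by decide)]; rfl
  · rw [if_pos (by decide)]
    show studentPoint Mex repEx false stQ1 2 = aQ 2
    rw [hsptQ1']; rfl

lemma hcycQ2 : Finset.filter (fun s => inCycle Mex repEx false stQ2 s) stQ2.remaining
    = (∅ : Finset (Fin 3)) := by
  ext a
  simp [Finset.mem_filter, show stQ2.remaining = (∅ : Finset (Fin 3)) from rfl]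

lemma hstepQ2 : ttcStep Mex repEx false stQ2 = stQ2 := by
  show ttcStep Mex repEx false stQ2 = ⟨∅, aQ⟩
  simp only [ttcStep, hcycQ2, TTCState.mk.injEq]
  refine ⟨by decide, ?_⟩
  funext s
  rw [if_neg (Finset.notMem_empty s)]
  rfl

lemma finQ : ttcm Mex repEx false = aQ := by
  simp only [ttcm, Fintype.card_fin]
  show ((ttcStep Mex repEx false)^[3] st0).assign = aQ
  rw [Function.iterate_succ_apply, hstepQ0, Function.iterate_succ_apply, hstepQ1,
    Function.iterate_succ_apply, hstepQ2, Function.iterate_zero_apply]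
  rfl

lemma hschR0 : schoolPoint Mex true st0 0 = some 2 := by
  simp only [schoolPoint]
  rw [if_pos ⟨by decide, 2, by decide⟩]
  exact argmin_toList _ _ _ (by decide) (by decide)

lemma hschR1 : schoolPoint Mex true st0 1 = some 0 := by
  simp only [schoolPoint]
  rw [if_neg (by decide)]
  exact argmin_toList _ _ _ (by decide) (by decide)

lemma hsptR0 : studentPoint Mex repEx true st0 0 = some 0 := by decide
lemma hsptR1 : studentPoint Mex repEx true st0 1 = some 1 := by decide
lemma hsptR2 : studentPoint Mex repEx true st0 2 = some 1 := by decide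

lemma hnextR : nextMap Mex repEx true st0 = ![2, 0, 0] := by
  funext s
  fin_cases s
  · show nextMap Mex repEx true st0 0 = 2
    simp only [nextMap, hsptR0, hschR0]
  · show nextMap Mex repEx true st0 1 = 0
    simp only [nextMap, hsptR1, hschR1]
  · show nextMap Mex repEx true st0 2 = 0
    simp only [nextMap, hsptR2, hschR1]

lemma hicR0 : inCycle Mex repEx true st0 0 := by
  simp only [inCycle, hnextR]; decide

lemma hicR2 : inCycle Mex repEx true st0 2 := by
  simp only [inCycle, hnextR]; decide

lemma hicR1 : ¬ inCycle Mex repEx true st0 1 := by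
  simp only [inCycle, hnextR]; decide

lemma hcycR0 : Finset.filter (fun s => inCycle Mex repEx true st0 s) st0.remaining
    = ({0, 2} : Finset (Fin 3)) := by
  ext a
  rcases fin3cases a with rfl | rfl | rfl <;>
    simp [Finset.mem_filter, hicR0, hicR1, hicR2, show st0.remaining = univ from rfl]

lemma hstepR0 : ttcStep Mex repEx true st0 = stR1 := by
  simp only [ttcStep, hcycR0, stR1, TTCState.mk.injEq]
  refine ⟨by decide, ?_⟩
  funext s
  rcases fin3cases s with rfl | rfl | rfl
  · rw [if_pos (by decide), hsptR0]; rfl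
  · rw [if_neg (by decide)]; rfl
  · rw [if_pos (by decide), hsptR2]; rfl

lemma hsptR1' : studentPoint Mex repEx true stR1 1 = none := by decide

lemma hicR1' : inCycle Mex repEx true stR1 1 := by
  refine ⟨1, by decide, ?_⟩
  show nextMap Mex repEx true stR1 1 = 1
  simp only [nextMap, hsptR1']

lemma hcycR1 : Finset.filter (fun s => inCycle Mex repEx true stR1 s) stR1.remaining
    = ({1} : Finset (Fin 3)) := by
  ext a
  rcases fin3cases a with rfl | rfl | rfl <;>
    simp [Finset.mem_filter, hicR1', show stR1.remaining = ({1} : Finset (Fin 3)) from rfl]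

lemma hstepR1 : ttcStep Mex repEx true stR1 = stR2 := by
  simp only [ttcStep, hcycR1, stR2, TTCState.mk.injEq]
  refine ⟨by decide, ?_⟩
  funext s
  rcases fin3cases s with rfl | rfl | rfl
  · rw [if_neg (by decide)]; rfl
  · rw [if_pos (by decide)]
    show studentPoint Mex repEx true stR1 1 = aR 1
    rw [hsptR1']; rfl
  · rw [if_neg (by decide)]; rfl

lemma hcycR2 : Finset.filter (fun s => inCycle Mex repEx true stR2 s) stR2.remaining
    = (∅ : Finset (Fin 3)) := by
  ext a
  simp [Finset.mem_filter, show stR2.remaining = (∅ : Finset (Fin 3)) from rfl]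

lemma hstepR2 : ttcStep Mex repEx true stR2 = stR2 := by
  show ttcStep Mex repEx true stR2 = ⟨∅, aR⟩
  simp only [ttcStep, hcycR2, TTCState.mk.injEq]
  refine ⟨by decide, ?_⟩
  funext s
  rw [if_neg (Finset.notMem_empty s)]
  rfl

lemma finR : ttcm Mex repEx true = aR := by
  simp only [ttcm, Fintype.card_fin]
  show ((ttcStep Mex repEx true)^[3] st0).assign = aR
  rw [Function.iterate_succ_apply, hstepR0, Function.iterate_succ_apply, hstepR1,
    Function.iterate_succ_apply, hstepR2, Function.iterate_zero_apply]
  rfl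

end Aux

open Market in
/-- In the 2-school, 3-student market (c₁ capacity 2, c₂ capacity 1, quotas (1,1),
i.e. reserves (1,0); majority s₁,s₂, minority s₃; priorities ≻_{c₁}: s₂,s₃,s₁ and
≻_{c₂}: s₁,s₂,s₃; preferences s₁: c₁, s₂: c₂, s₃: c₂), TTCM-Q assigns s₁→c₁, s₂→c₂,
s₃ unmatched, while TTCM-R assigns s₁→c₁, s₃→c₂, s₂ unmatched. -/
theorem ttcmQ_ttcmR_differ_in_example :
    let M : Market (Fin 3) (Fin 2) :=
      { minority := ![false, false, true]
        prio := ![![2, 0, 1], ![0, 1, 2]]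
        cap := ![2, 1]
        quota := ![1, 1] }
    let rep : Fin 3 → List (Fin 2) := ![[0], [1], [1]]
    ttcm M rep false = ![some 0, some 1, none] ∧
      ttcm M rep true = ![some 0, none, some 1] ∧
      ttcm M rep false ≠ ttcm M rep true := by
  intro M rep
  refine ⟨finQ, finR, ?_⟩
  show ttcm Mex repEx false ≠ ttcm Mex repEx true
  rw [finQ, finR]
  decide
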